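/- Let G be a linearly ordered abelian group (written additively), let u ∈ G with u ≥ 0, let n be a natural number, and let x ∈ G with 0 ≤ x ≤ n • u. Then there exist elements x₁, …, xₙ ∈ G with 0 ≤ xᵢ ≤ u for every i and x = x₁ + ⋯ + xₙ. -/

import Mathlib

/-- Let `G` be a linearly ordered abelian group, `u ≥ 0`, `n : ℕ`, and `x ∈ G` with
`0 ≤ x ≤ n • u`. Then there exist `x₁, …, xₙ ∈ G` with `0 ≤ xᵢ ≤ u` for every `i`
and `x = x₁ + ⋯ + xₙ`. -/
theorem stmt_5 (G : Type*) [AddCommGroup G] [LinearOrder G] [IsOrderedAddMonoid G] (u : G) (hu : 0 ≤ u)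
    (n : ℕ) (x : G) (hx0 : 0 ≤ x) (hxn : x ≤ n • u) :
    ∃ f : Fin n → G, (∀ i, 0 ≤ f i ∧ f i ≤ u) ∧ x = ∑ i, f i := by
  induction n generalizing x with
  | zero =>
    refine ⟨fun i => 0, fun i => ⟨le_refl _, hu⟩, ?_⟩
    simp only [zero_smul] at hxn
    simpa using le_antisymm hxn hx0
  | succ n ih =>
    have h1 : (0:G) ≤ x - min x u := by
      rcases min_le_iff.mp (le_refl (min x u)) with h | h <;> simp [min_le_iff, hx0, sub_nonneg, min_le_left]
    have h2 : x - min x u ≤ n • u := by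
      rcases le_total x u with h | h
      · simp [min_eq_left h, nsmul_nonneg hu]
      · rw [min_eq_right h, sub_le_iff_le_add]
        calc x ≤ (n+1) • u := hxn
          _ = n • u + u := succ_nsmul u n
    obtain ⟨f, hf, hsum⟩ := ih (x - min x u) h1 h2
    refine ⟨Fin.cons (min x u) f, ?_, ?_⟩
    · intro i
      refine Fin.cases ?_ ?_ i
      · exact ⟨le_min hx0 hu, min_le_right _ _⟩
      · intro j; simpa using hf j
    · rw [Fin.sum_cons, ← hsum, add_sub_cancel]
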